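/- Let μ > 0 and let h : ℝ → ℝ be continuous and 1-periodic. Then ∂ₓ²(P∗h)(x) = (12/μ)·(P∗h)(x) − (12/μ)·h(x) for every x ∈ ℝ. -/

import Mathlib

/-- The 1-periodic Green's function of the operator `1 - (μ/12)∂ₓ²`. -/
noncomputable def P (μ x : ℝ) : ℝ :=
  Real.sqrt (3/μ) *
    (Real.exp (2 * Real.sqrt (3/μ) * (x - ⌊x⌋)) +
     Real.exp (2 * Real.sqrt (3/μ) * (1 - (x - ⌊x⌋)))) /
  (Real.exp (2 * Real.sqrt (3/μ)) - 1)

/-- Periodic convolution with the kernel `P` over one period. -/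
noncomputable def pconv (μ : ℝ) (h : ℝ → ℝ) (x : ℝ) : ℝ :=
  ∫ y in (0:ℝ)..1, P μ (x - y) * h y

lemma P_per (μ : ℝ) : Function.Periodic (P μ) 1 := by
  intro x
  unfold P
  rw [Int.floor_add_one]
  push_cast
  ring_nf

lemma P_eq (μ : ℝ) {z : ℝ} (hz : z ∈ Set.Icc (0:ℝ) 1) :
    P μ z = Real.sqrt (3/μ) / (Real.exp (2*Real.sqrt (3/μ)) - 1) *
      (Real.exp (2*Real.sqrt (3/μ)*z) + Real.exp (2*Real.sqrt (3/μ)*(1-z))) := by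
  obtain ⟨h0, h1⟩ := hz
  rcases eq_or_lt_of_le h1 with rfl | h1
  · unfold P
    norm_num
    ring
  · unfold P
    rw [Int.floor_eq_zero_iff.mpr ⟨h0, h1⟩]
    push_cast
    ring

lemma key_deriv (g : ℝ → ℝ) (hg : Continuous g) (x : ℝ) :
    HasDerivAt (fun u => ∫ y in (u-1)..u, g y) (g x - g (x-1)) x := by
  have h1 : HasDerivAt (fun u => ∫ y in (0:ℝ)..u, g y) (g x) x :=
    intervalIntegral.integral_hasDerivAt_right (hg.intervalIntegrable 0 x)
      (hg.stronglyMeasurableAtFilter _ _) hg.continuousAt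
  have h2' : HasDerivAt (fun u => ∫ y in (0:ℝ)..u, g y) (g (x-1)) (x-1) :=
    intervalIntegral.integral_hasDerivAt_right (hg.intervalIntegrable 0 (x-1))
      (hg.stronglyMeasurableAtFilter _ _) hg.continuousAt
  have h2 : HasDerivAt (fun u => ∫ y in (0:ℝ)..(u-1), g y) (g (x-1)) x := by
    have := h2'.comp x ((hasDerivAt_id x).sub_const 1)
    simpa [Function.comp_def] using this
  have h3 := h1.sub h2
  have heq : (fun u => (∫ y in (0:ℝ)..u, g y) - ∫ y in (0:ℝ)..(u-1), g y)
      = fun u => ∫ y in (u-1)..u, g y := by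
    funext u
    rw [intervalIntegral.integral_interval_sub_left (hg.intervalIntegrable 0 u)
      (hg.intervalIntegrable 0 (u-1))]
  rw [← heq]; exact h3

/-- For `μ > 0` and `h` continuous and 1-periodic,
`∂ₓ²(P∗h) = (12/μ)·(P∗h) - (12/μ)·h` everywhere. -/
theorem stmt2 (μ : ℝ) (hμ : 0 < μ) (h : ℝ → ℝ) (hc : Continuous h)
    (hp : Function.Periodic h 1) :
    ∀ x : ℝ, deriv (deriv (pconv μ h)) x = (12/μ) * pconv μ h x - (12/μ) * h x := by
  have h3μ : (0:ℝ) < 3/μ := by positivity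
  set s := Real.sqrt (3/μ) with hs
  have hs0 : 0 < s := Real.sqrt_pos.mpr h3μ
  have hsq : s * s = 3 / μ := Real.mul_self_sqrt h3μ.le
  have hE1 : 1 < Real.exp (2*s) := by
    rw [show (1:ℝ) = Real.exp 0 by simp]
    exact Real.exp_lt_exp.mpr (by positivity)
  have hEne : Real.exp (2*s) - 1 ≠ 0 := by linarith
  set c := s / (Real.exp (2*s) - 1) with hcdef
  set g₁ : ℝ → ℝ := fun y => Real.exp (-(2*s*y)) * h y with hg₁
  set g₂ : ℝ → ℝ := fun y => Real.exp (2*s*y) * h y with hg₂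
  have hg₁c : Continuous g₁ := (Real.continuous_exp.comp (by continuity)).mul hc
  have hg₂c : Continuous g₂ := (Real.continuous_exp.comp (by continuity)).mul hc
  set G₁ : ℝ → ℝ := fun u => ∫ y in (u-1)..u, g₁ y with hG₁
  set G₂ : ℝ → ℝ := fun u => ∫ y in (u-1)..u, g₂ y with hG₂
  set F : ℝ → ℝ := fun u => c * (Real.exp (2*s*u) * G₁ u
      + Real.exp (2*s) * (Real.exp (-(2*s*u)) * G₂ u)) with hFdef
  set F' : ℝ → ℝ := fun u => c * (2*s) * (Real.exp (2*s*u) * G₁ u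
      - Real.exp (2*s) * (Real.exp (-(2*s*u)) * G₂ u)) with hF'def
  -- Step 1 : pconv μ h = F
  have hPF : pconv μ h = F := by
    funext x
    unfold pconv
    have hper : Function.Periodic (fun y => P μ (x - y) * h y) 1 := by
      intro y
      simp only
      rw [show x - (y+1) = (x - y) - 1 by ring, (P_per μ).sub_eq, hp y]
    have hshift := hper.intervalIntegral_add_eq 0 (x - 1)
    norm_num at hshift
    have hcong : (∫ y in (x-1)..x, P μ (x - y) * h y)
        = ∫ y in (x-1)..x, ((c * Real.exp (2*s*x)) * g₁ y
            + (c * Real.exp (2*s) * Real.exp (-(2*s*x))) * g₂ y) := by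
      apply intervalIntegral.integral_congr
      intro y hy
      rw [Set.uIcc_of_le (by linarith : x - 1 ≤ x)] at hy
      obtain ⟨hy1, hy2⟩ := hy
      have hz : x - y ∈ Set.Icc (0:ℝ) 1 := ⟨by linarith, by linarith⟩
      show P μ (x - y) * h y = _
      rw [P_eq μ hz, ← hs]
      simp only [hg₁, hg₂]
      rw [hcdef, show 2*s*(x-y) = 2*s*x + -(2*s*y) by ring,
        show 2*s*(1-(x-y)) = 2*s + (-(2*s*x) + 2*s*y) by ring,
        Real.exp_add, Real.exp_add, Real.exp_add]
      ring
    rw [hshift, hcong, intervalIntegral.integral_add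
        ((show Continuous (fun y => c * Real.exp (2*s*x) * g₁ y) from
          continuous_const.mul hg₁c).intervalIntegrable _ _)
        ((show Continuous (fun y => c * Real.exp (2*s) * Real.exp (-(2*s*x)) * g₂ y) from
          continuous_const.mul hg₂c).intervalIntegrable _ _),
      intervalIntegral.integral_const_mul, intervalIntegral.integral_const_mul]
    rw [hFdef]
    simp only [hG₁, hG₂]
    ring
  -- derivative building blocks
  have hexp : ∀ u : ℝ, HasDerivAt (fun t => Real.exp (2*s*t)) (Real.exp (2*s*u) * (2*s)) u := by
    intro u
    have hlin : HasDerivAt (fun t : ℝ => 2*s*t) (2*s) u := by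
      simpa using (hasDerivAt_id u).const_mul (2*s)
    exact hlin.exp
  have hexpn : ∀ u : ℝ, HasDerivAt (fun t => Real.exp (-(2*s*t)))
      (Real.exp (-(2*s*u)) * (-(2*s))) u := by
    intro u
    have hlin : HasDerivAt (fun t : ℝ => -(2*s*t)) (-(2*s)) u := by
      simpa [Pi.neg_def] using ((hasDerivAt_id u).const_mul (2*s)).neg
    exact hlin.exp
  have hDG₁ : ∀ u : ℝ, HasDerivAt G₁ (g₁ u - g₁ (u-1)) u := fun u => key_deriv g₁ hg₁c u
  have hDG₂ : ∀ u : ℝ, HasDerivAt G₂ (g₂ u - g₂ (u-1)) u := fun u => key_deriv g₂ hg₂c u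
  have hraw : ∀ u : ℝ, HasDerivAt F
      (c * ((Real.exp (2*s*u) * (2*s) * G₁ u + Real.exp (2*s*u) * (g₁ u - g₁ (u-1)))
        + Real.exp (2*s) * (Real.exp (-(2*s*u)) * (-(2*s)) * G₂ u
            + Real.exp (-(2*s*u)) * (g₂ u - g₂ (u-1))))) u := by
    intro u
    exact (((hexp u).mul (hDG₁ u)).add (((hexpn u).mul (hDG₂ u)).const_mul
      (Real.exp (2*s)))).const_mul c
  -- exp bookkeeping
  have hDF : ∀ u : ℝ, HasDerivAt F (F' u) u := by
    intro u
    have H := hraw u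
    have hval : (c * ((Real.exp (2*s*u) * (2*s) * G₁ u + Real.exp (2*s*u) * (g₁ u - g₁ (u-1)))
        + Real.exp (2*s) * (Real.exp (-(2*s*u)) * (-(2*s)) * G₂ u
            + Real.exp (-(2*s*u)) * (g₂ u - g₂ (u-1))))) = F' u := by
      rw [hF'def]
      simp only [hg₁, hg₂]
      rw [hp.sub_eq u]
      rw [Real.exp_neg, Real.exp_neg, show 2*s*(u-1) = 2*s*u - 2*s by ring, Real.exp_sub]
      field_simp
      ring
    rwa [hval] at H
  have hraw2 : ∀ u : ℝ, HasDerivAt F'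
      (c * (2*s) * ((Real.exp (2*s*u) * (2*s) * G₁ u + Real.exp (2*s*u) * (g₁ u - g₁ (u-1)))
        - Real.exp (2*s) * (Real.exp (-(2*s*u)) * (-(2*s)) * G₂ u
            + Real.exp (-(2*s*u)) * (g₂ u - g₂ (u-1))))) u := by
    intro u
    exact (((hexp u).mul (hDG₁ u)).sub (((hexpn u).mul (hDG₂ u)).const_mul
      (Real.exp (2*s)))).const_mul (c * (2*s))
  have hDF' : ∀ u : ℝ, HasDerivAt F' ((12/μ) * F u - (12/μ) * h u) u := by
    intro u
    have H := hraw2 u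
    have hval : (c * (2*s) * ((Real.exp (2*s*u) * (2*s) * G₁ u
          + Real.exp (2*s*u) * (g₁ u - g₁ (u-1)))
        - Real.exp (2*s) * (Real.exp (-(2*s*u)) * (-(2*s)) * G₂ u
            + Real.exp (-(2*s*u)) * (g₂ u - g₂ (u-1)))))
        = (12/μ) * F u - (12/μ) * h u := by
      rw [hFdef]
      simp only [hg₁, hg₂]
      rw [hp.sub_eq u]
      rw [hcdef, Real.exp_neg, Real.exp_neg, show 2*s*(u-1) = 2*s*u - 2*s by ring,
        Real.exp_sub]
      rw [show (12:ℝ)/μ = 4 * (s*s) by rw [hsq]; ring]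
      field_simp
      ring_nf
      have hinv : (-1 + Real.exp (s*2)) * (-1 + Real.exp (s*2))⁻¹ = 1 :=
        mul_inv_cancel₀ (ne_of_gt (by rw [mul_comm s 2]; linarith))
      linear_combination (-4 * Real.exp (s*u*2) * h u) * hinv
    rwa [hval] at H
  have hderiv1 : deriv (pconv μ h) = F' := by
    funext u
    rw [hPF]
    exact (hDF u).deriv
  intro x
  rw [hderiv1, (hDF' x).deriv, hPF]
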